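/- Let p be a polynomial of degree at most n that is monotone on a compact interval [a,b] with a < b. Then there exists a finite partition a = s_0 < s_1 < ... < s_m = b such that on each sub-interval [s_{i-1}, s_i], the Bernstein coefficients of p restricted (and affinely rescaled) to that sub-interval have minimum equal to the minimum of p on the sub-interval and maximum equal to the maximum of p on the sub-interval. -/

import Mathlib

open Finset
open Finset

noncomputable def bw (n j k : ℕ) : ℝ := (j.choose k : ℝ) / (n.choose k : ℝ)

lemma bw_zero (n j : ℕ) : bw n j 0 = 1 := by simp [bw]

lemma bw_eq_zero {j k : ℕ} (n : ℕ) (h : j < k) : bw n j k = 0 := by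
  simp [bw, Nat.choose_eq_zero_of_lt h]

lemma bw_self {n k : ℕ} (h : k ≤ n) : bw n n k = 1 := by
  have := Nat.choose_pos h
  rw [bw, div_self]
  exact_mod_cast this.ne'

lemma bw_nonneg (n j k : ℕ) : 0 ≤ bw n j k := by simp only [bw]; positivity

lemma bw_le_one {n j : ℕ} (k : ℕ) (hj : j ≤ n) : bw n j k ≤ 1 := by
  rcases le_or_gt k n with hk | hk
  · have h1 : (0:ℝ) < (n.choose k : ℝ) := by exact_mod_cast Nat.choose_pos hk
    rw [bw, div_le_one h1]
    exact_mod_cast Nat.choose_le_choose k hj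
  · have : j < k := lt_of_le_of_lt hj hk
    rw [bw_eq_zero n this]; norm_num

lemma abs_bw_le_one {n j : ℕ} (k : ℕ) (hj : j ≤ n) : |bw n j k| ≤ 1 := by
  rw [abs_of_nonneg (bw_nonneg n j k)]; exact bw_le_one k hj

lemma bw_ge {n j r : ℕ} (hr : r ≤ j) (hj : j ≤ n) :
    1 / (n.choose r : ℝ) ≤ bw n j r := by
  have hrn : r ≤ n := hr.trans hj
  have h1 : (0:ℝ) < (n.choose r : ℝ) := by exact_mod_cast Nat.choose_pos hrn
  rw [bw, div_le_div_iff_of_pos_right h1]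
  exact_mod_cast Nat.choose_pos hr

lemma one_sub_bw_ge {n j r : ℕ} (hr1 : 1 ≤ r) (hrn : r ≤ n) (hj : j < n) :
    1 / (n.choose r : ℝ) ≤ 1 - bw n j r := by
  have hn1 : 1 ≤ n := hr1.trans hrn
  obtain ⟨n', rfl⟩ : ∃ n', n = n' + 1 := ⟨n - 1, by omega⟩
  obtain ⟨r', rfl⟩ : ∃ r', r = r' + 1 := ⟨r - 1, by omega⟩
  have hpascal : (n' + 1).choose (r' + 1) = n'.choose r' + n'.choose (r' + 1) :=
    Nat.choose_succ_succ n' r'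
  have hjle : j ≤ n' := by omega
  have hch : j.choose (r' + 1) ≤ n'.choose (r' + 1) := Nat.choose_le_choose _ hjle
  have hpos' : 1 ≤ n'.choose r' := Nat.choose_pos (by omega)
  have hNpos : (0:ℝ) < ((n' + 1).choose (r' + 1) : ℝ) := by
    exact_mod_cast Nat.choose_pos (by omega)
  have key : (j.choose (r' + 1) : ℝ) + 1 ≤ ((n' + 1).choose (r' + 1) : ℝ) := by
    have : j.choose (r' + 1) + 1 ≤ (n' + 1).choose (r' + 1) := by omega
    exact_mod_cast this
  rw [bw, le_sub_iff_add_le, ← add_div, div_le_one hNpos]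
  linarith

lemma keyC (n : ℕ) (g : ℕ → ℝ) (s0 : ℝ) (hs0 : 0 < s0) (hg0 : g 0 = 0)
    (hpos : ∀ h : ℝ, 0 < h → h ≤ s0 → 0 < ∑ k ∈ range (n + 1), g k * h ^ k) :
    ∃ h1 : ℝ, 0 < h1 ∧ h1 ≤ s0 ∧ ∀ h : ℝ, 0 < h → h ≤ h1 → ∀ j ≤ n,
      (0 ≤ ∑ k ∈ range (n + 1), g k * h ^ k * bw n j k) ∧
      (0 ≤ ∑ k ∈ range (n + 1), g k * h ^ k * (1 - bw n j k)) := by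
  -- there is a nonzero coefficient
  have hex : ∃ k, k ≤ n ∧ g k ≠ 0 := by
    by_contra hc
    push_neg at hc
    have := hpos s0 hs0 le_rfl
    have hz : ∑ k ∈ range (n + 1), g k * s0 ^ k = 0 := by
      apply Finset.sum_eq_zero
      intro k hk
      rw [Finset.mem_range] at hk
      rw [hc k (by omega)]; ring
    rw [hz] at this; exact lt_irrefl 0 this
  obtain ⟨k0, hk0n, hk0⟩ := hex
  classical
  have hexg : ∃ k, g k ≠ 0 := ⟨k0, hk0⟩
  set r := Nat.find hexg with hrdef
  have hrne : g r ≠ 0 := Nat.find_spec hexg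
  have hrmin : ∀ k, k < r → g k = 0 := by
    intro k hk
    have := Nat.find_min hexg hk
    simpa using this
  have hrn : r ≤ n := le_trans (Nat.find_min' hexg hk0) hk0n
  have hr1 : 1 ≤ r := by
    rcases Nat.eq_zero_or_pos r with h | h
    · exact absurd (h ▸ hg0) hrne
    · omega
  have hM0 : 0 ≤ ∑ k ∈ range (n + 1), |g k| := Finset.sum_nonneg fun k _ => abs_nonneg _
  set M := ∑ k ∈ range (n + 1), |g k| with hMdef
  have factor : ∀ (φ : ℕ → ℝ) (h : ℝ), ∑ k ∈ range (n + 1), g k * h ^ k * φ k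
      = h ^ r * ∑ i ∈ range (n + 1 - r), g (r + i) * h ^ i * φ (r + i) := by
    intro φ h
    have hrn1 : r ≤ n + 1 := by omega
    have h1 : ∑ k ∈ Finset.Ico 0 r, g k * h ^ k * φ k = 0 := by
      apply Finset.sum_eq_zero
      intro k hk
      rw [hrmin k (Finset.mem_Ico.mp hk).2]; ring
    conv_lhs => rw [range_eq_Ico, ← Finset.sum_Ico_consecutive _ (Nat.zero_le r) hrn1]
    rw [h1, zero_add, Finset.sum_Ico_eq_sum_range, Finset.mul_sum]
    apply Finset.sum_congr rfl
    intro i _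
    rw [pow_add]; ring
  have tailabs : ∀ (φ : ℕ → ℝ) (h : ℝ), 0 ≤ h → h ≤ 1 → (∀ k, |φ k| ≤ 1) →
      |(∑ i ∈ range (n + 1 - r), g (r + i) * h ^ i * φ (r + i)) - g r * φ r| ≤ h * M := by
    intro φ h hh0 hh1 hφ
    have hidx : n + 1 - r = (n - r) + 1 := by omega
    rw [hidx, Finset.sum_range_succ']
    simp only [pow_zero, Nat.add_zero, mul_one]
    rw [add_sub_cancel_right]
    calc |∑ i ∈ range (n - r), g (r + (i + 1)) * h ^ (i + 1) * φ (r + (i + 1))|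
        ≤ ∑ i ∈ range (n - r), |g (r + (i + 1)) * h ^ (i + 1) * φ (r + (i + 1))| :=
          Finset.abs_sum_le_sum_abs _ _
      _ ≤ ∑ i ∈ range (n - r), |g (r + (i + 1))| * h := by
          apply Finset.sum_le_sum
          intro i _
          rw [abs_mul, abs_mul]
          have h1 : |h ^ (i + 1)| ≤ h := by
            rw [abs_of_nonneg (pow_nonneg hh0 _)]
            calc h ^ (i + 1) = h * h ^ i := by ring
              _ ≤ h * 1 := by
                  apply mul_le_mul_of_nonneg_left _ hh0
                  exact pow_le_one₀ hh0 hh1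
              _ = h := mul_one h
          calc |g (r + (i + 1))| * |h ^ (i + 1)| * |φ (r + (i + 1))|
              ≤ |g (r + (i + 1))| * |h ^ (i + 1)| * 1 := by
                apply mul_le_mul_of_nonneg_left (hφ _) (by positivity)
            _ = |g (r + (i + 1))| * |h ^ (i + 1)| := mul_one _
            _ ≤ |g (r + (i + 1))| * h := mul_le_mul_of_nonneg_left h1 (abs_nonneg _)
      _ = (∑ i ∈ range (n - r), |g (r + 1 + i)|) * h := by
          rw [Finset.sum_mul]
          apply Finset.sum_congr rfl
          intro i _
          rw [show r + (i + 1) = r + 1 + i by omega]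
      _ ≤ M * h := by
          apply mul_le_mul_of_nonneg_right _ hh0
          have : ∑ i ∈ range (n - r), |g (r + 1 + i)| = ∑ k ∈ Finset.Ico (r + 1) (n + 1), |g k| := by
            rw [Finset.sum_Ico_eq_sum_range, show n + 1 - (r + 1) = n - r from by omega]
          rw [this, hMdef, range_eq_Ico]
          apply Finset.sum_le_sum_of_subset_of_nonneg
          · apply Finset.Ico_subset_Ico <;> omega
          · intro k _ _; exact abs_nonneg _
      _ = h * M := mul_comm _ _
  have grpos : 0 < g r := by
    rcases lt_trichotomy (g r) 0 with hneg | hz | hposr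
    · exfalso
      have hMp : (0:ℝ) < M + 1 := by linarith
      set h0 : ℝ := min s0 (min 1 ((-g r) / (2 * (M + 1)))) with hh0def
      have h0pos : 0 < h0 := by
        apply lt_min hs0
        apply lt_min one_pos
        apply div_pos (by linarith) (by linarith)
      have h0s0 : h0 ≤ s0 := min_le_left _ _
      have h01 : h0 ≤ 1 := le_trans (min_le_right _ _) (min_le_left _ _)
      have h0b : h0 ≤ (-g r) / (2 * (M + 1)) := le_trans (min_le_right _ _) (min_le_right _ _)
      have hsum := hpos h0 h0pos h0s0
      have hfac := factor (fun _ => 1) h0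
      simp only [mul_one] at hfac
      rw [hfac] at hsum
      have hTpos : 0 < ∑ i ∈ range (n + 1 - r), g (r + i) * h0 ^ i := by
        by_contra hc
        push_neg at hc
        have : h0 ^ r * ∑ i ∈ range (n + 1 - r), g (r + i) * h0 ^ i ≤ 0 :=
          mul_nonpos_of_nonneg_of_nonpos (pow_nonneg h0pos.le r) hc
        linarith
      have htail := tailabs (fun _ => 1) h0 h0pos.le h01 (fun _ => by norm_num)
      simp only [mul_one] at htail
      have hub : ∑ i ∈ range (n + 1 - r), g (r + i) * h0 ^ i ≤ g r + h0 * M :=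
        by have := (abs_le.mp htail).2; linarith
      have hh0M : h0 * M ≤ (-g r) / 2 := by
        have h1 : h0 * M ≤ ((-g r) / (2 * (M + 1))) * M :=
          mul_le_mul_of_nonneg_right h0b hM0
        have h2 : ((-g r) / (2 * (M + 1))) * M ≤ (-g r) / 2 := by
          rw [div_mul_eq_mul_div, div_le_div_iff₀ (by positivity) (by norm_num)]
          nlinarith
        linarith
      linarith
    · exact absurd hz hrne
    · exact hposr
  have hCnr : (0:ℝ) < (n.choose r : ℝ) := by exact_mod_cast Nat.choose_pos hrn
  set ε : ℝ := g r / (n.choose r : ℝ) with hεdef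
  have hεpos : 0 < ε := div_pos grpos hCnr
  have hεle : ε ≤ g r * (1 / (n.choose r : ℝ)) := by rw [hεdef, mul_one_div]
  refine ⟨min s0 (min 1 (ε / (M + 1))), ?_, min_le_left _ _, ?_⟩
  · apply lt_min hs0
    apply lt_min one_pos
    positivity
  intro h hh hhle j hj
  have hhs0 : h ≤ s0 := le_trans hhle (min_le_left _ _)
  have hh1 : h ≤ 1 := le_trans hhle (le_trans (min_le_right _ _) (min_le_left _ _))
  have hhε : h ≤ ε / (M + 1) := le_trans hhle (le_trans (min_le_right _ _) (min_le_right _ _))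
  have hhM : h * M ≤ ε := by
    have h1 : h * M ≤ (ε / (M + 1)) * M := mul_le_mul_of_nonneg_right hhε hM0
    have h2 : (ε / (M + 1)) * M ≤ ε := by
      rw [div_mul_eq_mul_div, div_le_iff₀ (by linarith)]
      nlinarith
    linarith
  constructor
  · rw [factor (fun k => bw n j k) h]
    apply mul_nonneg (pow_nonneg hh.le r)
    rcases lt_or_ge j r with hjr | hjr
    · apply le_of_eq
      symm
      apply Finset.sum_eq_zero
      intro i _
      rw [bw_eq_zero n (by omega : j < r + i)]
      ring
    · have habs := tailabs (fun k => bw n j k) h hh.le hh1 (fun k => abs_bw_le_one k hj)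
      have hlb := (abs_le.mp habs).1
      have hge : g r * (1 / (n.choose r : ℝ)) ≤ g r * bw n j r :=
        mul_le_mul_of_nonneg_left (bw_ge hjr hj) grpos.le
      linarith
  · rw [factor (fun k => 1 - bw n j k) h]
    apply mul_nonneg (pow_nonneg hh.le r)
    rcases eq_or_lt_of_le hj with hjn | hjn
    · apply le_of_eq
      symm
      apply Finset.sum_eq_zero
      intro i hi
      rw [Finset.mem_range] at hi
      rw [hjn, bw_self (by omega : r + i ≤ n)]
      ring
    · have hφ : ∀ k, |1 - bw n j k| ≤ 1 := by
        intro k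
        rw [abs_le]
        constructor
        · have := bw_le_one (n := n) (j := j) k hj; linarith
        · have := bw_nonneg n j k; linarith
      have habs := tailabs (fun k => 1 - bw n j k) h hh.le hh1 hφ
      have hlb : -(h * M) ≤ (∑ i ∈ range (n + 1 - r), g (r + i) * h ^ i * (1 - bw n j (r + i)))
          - g r * (1 - bw n j r) := by simpa using (abs_le.mp habs).1
      have hge : g r * (1 / (n.choose r : ℝ)) ≤ g r * (1 - bw n j r) :=
        mul_le_mul_of_nonneg_left (one_sub_bw_ge hr1 hrn hjn) grpos.le
      linarith

noncomputable def Bb (n j : ℕ) (t : ℝ) : ℝ := (n.choose j : ℝ) * t ^ j * (1 - t) ^ (n - j)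

lemma bernstein_basis_eq (n k : ℕ) (hk : k ≤ n) (t : ℝ) :
    ∑ j ∈ range (n + 1), bw n j k * Bb n j t = t ^ k := by
  have hnk : (0:ℝ) < (n.choose k : ℝ) := by exact_mod_cast Nat.choose_pos hk
  have key : ∑ j ∈ range (n + 1),
      ((j.choose k : ℝ) * (n.choose j : ℝ)) * (t ^ j * (1 - t) ^ (n - j))
      = (n.choose k : ℝ) * t ^ k := by
    rw [range_eq_Ico, ← Finset.sum_Ico_consecutive _ (Nat.zero_le k) (by omega)]
    have h1 : ∑ j ∈ Finset.Ico 0 k,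
        ((j.choose k : ℝ) * (n.choose j : ℝ)) * (t ^ j * (1 - t) ^ (n - j)) = 0 := by
      apply Finset.sum_eq_zero
      intro j hj
      rw [Finset.mem_Ico] at hj
      rw [Nat.choose_eq_zero_of_lt hj.2]
      simp
    rw [h1, zero_add, Finset.sum_Ico_eq_sum_range]
    have h2 : n + 1 - k = (n - k) + 1 := by omega
    rw [h2]
    have h3 : ∀ i ∈ range (n - k + 1),
        (((k + i).choose k : ℝ) * (n.choose (k + i) : ℝ)) * (t ^ (k + i) * (1 - t) ^ (n - (k + i)))
        = (n.choose k : ℝ) * t ^ k * (((n - k).choose i : ℝ) * (t ^ i * (1 - t) ^ ((n - k) - i))) := by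
      intro i hi
      rw [Finset.mem_range] at hi
      have hik : k + i ≤ n := by omega
      have hcm : n.choose (k + i) * (k + i).choose k = n.choose k * (n - k).choose (k + i - k) :=
        Nat.choose_mul (Nat.le_add_right k i)
      have hcm' : ((k + i).choose k : ℝ) * (n.choose (k + i) : ℝ)
          = (n.choose k : ℝ) * ((n - k).choose i : ℝ) := by
        have : k + i - k = i := by omega
        rw [this] at hcm
        push_cast [mul_comm] at hcm ⊢
        exact_mod_cast hcm
      rw [hcm', pow_add]
      have : n - (k + i) = (n - k) - i := by omega
      rw [this]; ring
    rw [Finset.sum_congr rfl h3, ← Finset.mul_sum]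
    have h4 : ∑ i ∈ range (n - k + 1), (((n - k).choose i : ℝ) * (t ^ i * (1 - t) ^ ((n - k) - i))) = 1 := by
      have := add_pow t (1 - t) (n - k)
      simp only [add_sub_cancel, one_pow] at this
      refine Eq.trans ?_ this.symm
      apply Finset.sum_congr rfl
      intro i _; ring
    rw [h4, mul_one]
  have : ∑ j ∈ range (n + 1), bw n j k * Bb n j t
      = (∑ j ∈ range (n + 1),
        ((j.choose k : ℝ) * (n.choose j : ℝ)) * (t ^ j * (1 - t) ^ (n - j))) / (n.choose k : ℝ) := by
    rw [Finset.sum_div]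
    apply Finset.sum_congr rfl
    intro j _
    rw [bw, Bb]; field_simp
  rw [this, key, mul_comm, mul_div_assoc, div_self hnk.ne', mul_one]

lemma bernstein_rep (n : ℕ) (c : ℕ → ℝ) (t : ℝ) :
    ∑ j ∈ range (n + 1), (∑ k ∈ range (n + 1), c k * bw n j k) * Bb n j t
      = ∑ k ∈ range (n + 1), c k * t ^ k := by
  have : ∀ j ∈ range (n + 1), (∑ k ∈ range (n + 1), c k * bw n j k) * Bb n j t
      = ∑ k ∈ range (n + 1), c k * (bw n j k * Bb n j t) := by
    intro j _
    rw [Finset.sum_mul]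
    exact Finset.sum_congr rfl fun k _ => by ring
  rw [Finset.sum_congr rfl this, Finset.sum_comm]
  apply Finset.sum_congr rfl
  intro k hk
  rw [← Finset.mul_sum, bernstein_basis_eq n k (by rw [Finset.mem_range] at hk; omega) t]

lemma bernstein_rep_reflect (n : ℕ) (c : ℕ → ℝ) (t : ℝ) :
    ∑ j ∈ range (n + 1), (∑ k ∈ range (n + 1), c k * bw n (n - j) k) * Bb n j t
      = ∑ k ∈ range (n + 1), c k * (1 - t) ^ k := by
  rw [← bernstein_rep n c (1 - t)]
  have hre := Finset.sum_range_reflect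
    (fun j => (∑ k ∈ range (n + 1), c k * bw n j k) * Bb n j (1 - t)) (n + 1)
  simp only [Nat.add_sub_cancel] at hre
  rw [← hre]
  apply Finset.sum_congr rfl
  intro j hj
  rw [Finset.mem_range] at hj
  have hjn : j ≤ n := by omega
  have hBb : Bb n (n - j) (1 - t) = Bb n j t := by
    rw [Bb, Bb, Nat.choose_symm hjn, sub_sub_cancel, Nat.sub_sub_self hjn]
    ring
  rw [hBb]

noncomputable def eco (n : ℕ) (α : ℕ → ℝ) (k : ℕ) (c : ℝ) : ℝ :=
  ∑ m ∈ range (n + 1), α m * ((m.choose k : ℝ) * c ^ (m - k))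

lemma expand_poly (n : ℕ) (α : ℕ → ℝ) (p : ℝ → ℝ)
    (hp : ∀ t : ℝ, p t = ∑ k ∈ range (n + 1), α k * t ^ k) (c u : ℝ) :
    p (c + u) = ∑ k ∈ range (n + 1), eco n α k c * u ^ k := by
  simp only [eco, Finset.sum_mul]
  rw [Finset.sum_comm]
  rw [hp (c + u)]
  apply Finset.sum_congr rfl
  intro m hm
  rw [Finset.mem_range] at hm
  have hsub : ∀ k ∈ range (n + 1), k ∉ range (m + 1) →
      α m * ((m.choose k : ℝ) * c ^ (m - k)) * u ^ k = 0 := by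
    intro k _ hk2
    rw [Finset.mem_range, not_lt] at hk2
    rw [Nat.choose_eq_zero_of_lt (by omega)]
    simp
  rw [← Finset.sum_subset (Finset.range_subset_range.mpr (by omega)) hsub]
  have := add_pow u c m
  calc α m * (c + u) ^ m = α m * (u + c) ^ m := by ring_nf
    _ = ∑ k ∈ range (m + 1), α m * ((m.choose k : ℝ) * c ^ (m - k)) * u ^ k := by
        rw [this, Finset.mul_sum]
        apply Finset.sum_congr rfl
        intro k _; ring

lemma eco_zero (n : ℕ) (α : ℕ → ℝ) (p : ℝ → ℝ)
    (hp : ∀ t : ℝ, p t = ∑ k ∈ range (n + 1), α k * t ^ k) (c : ℝ) :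
    eco n α 0 c = p c := by
  rw [eco, hp c]
  apply Finset.sum_congr rfl
  intro m _
  simp

def PieceGood (n : ℕ) (p : ℝ → ℝ) (c d : ℝ) : Prop :=
  ∃ β : ℕ → ℝ,
    (∀ t ∈ Set.Icc (0 : ℝ) 1,
      p (c + (d - c) * t) =
        ∑ j ∈ Finset.range (n + 1),
          β j * ((n.choose j : ℝ) * t ^ j * (1 - t) ^ (n - j))) ∧
    IsLeast (p '' Set.Icc c d)
      ((Finset.range (n + 1)).inf' ⟨0, Finset.mem_range.mpr (Nat.succ_pos n)⟩ β) ∧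
    IsGreatest (p '' Set.Icc c d)
      ((Finset.range (n + 1)).sup' ⟨0, Finset.mem_range.mpr (Nat.succ_pos n)⟩ β)

lemma inf'_eq_of_mem {n : ℕ} {β : ℕ → ℝ} {v : ℝ} (j0 : ℕ) (hj0 : j0 ∈ range (n + 1))
    (hv : β j0 = v) (hall : ∀ j ∈ range (n + 1), v ≤ β j) :
    (range (n + 1)).inf' ⟨0, Finset.mem_range.mpr (Nat.succ_pos n)⟩ β = v :=
  le_antisymm ((Finset.inf'_le _ hj0).trans_eq hv) (Finset.le_inf' _ _ hall)

lemma sup'_eq_of_mem {n : ℕ} {β : ℕ → ℝ} {v : ℝ} (j0 : ℕ) (hj0 : j0 ∈ range (n + 1))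
    (hv : β j0 = v) (hall : ∀ j ∈ range (n + 1), β j ≤ v) :
    (range (n + 1)).sup' ⟨0, Finset.mem_range.mpr (Nat.succ_pos n)⟩ β = v :=
  le_antisymm (Finset.sup'_le _ _ hall) (hv ▸ Finset.le_sup' _ hj0)

lemma isLeast_image_of_monotone {p : ℝ → ℝ} {a b c d : ℝ} (hm : MonotoneOn p (Set.Icc a b))
    (hsub : Set.Icc c d ⊆ Set.Icc a b) (hcd : c ≤ d) : IsLeast (p '' Set.Icc c d) (p c) := by
  constructor
  · exact ⟨c, ⟨le_rfl, hcd⟩, rfl⟩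
  · rintro y ⟨x, hx, rfl⟩
    exact hm (hsub ⟨le_rfl, hcd⟩) (hsub hx) hx.1

lemma isGreatest_image_of_monotone {p : ℝ → ℝ} {a b c d : ℝ} (hm : MonotoneOn p (Set.Icc a b))
    (hsub : Set.Icc c d ⊆ Set.Icc a b) (hcd : c ≤ d) : IsGreatest (p '' Set.Icc c d) (p d) := by
  constructor
  · exact ⟨d, ⟨hcd, le_rfl⟩, rfl⟩
  · rintro y ⟨x, hx, rfl⟩
    exact hm (hsub hx) (hsub ⟨hcd, le_rfl⟩) hx.2

lemma right_piece (n : ℕ) (a b : ℝ) (p : ℝ → ℝ) (α : ℕ → ℝ)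
    (hp : ∀ t : ℝ, p t = ∑ k ∈ range (n + 1), α k * t ^ k)
    (hsm : StrictMonoOn p (Set.Icc a b)) (t : ℝ) (hat : a ≤ t) (htb : t < b) :
    ∃ h1 : ℝ, 0 < h1 ∧ ∀ h : ℝ, 0 < h → h ≤ h1 → PieceGood n p t (t + h) := by
  classical
  set g : ℕ → ℝ := fun k => if k = 0 then 0 else eco n α k t with hgdef
  have hsum : ∀ h' : ℝ, ∑ k ∈ range (n + 1), g k * h' ^ k = p (t + h') - p t := by
    intro h'
    have e1 : ∑ k ∈ range (n + 1), g k * h' ^ k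
        = ∑ k ∈ range (n + 1), eco n α k t * h' ^ k - eco n α 0 t := by
      rw [Finset.sum_range_succ' (fun k => g k * h' ^ k) n,
          Finset.sum_range_succ' (fun k => eco n α k t * h' ^ k) n]
      have e2 : ∀ i ∈ range n, g (i + 1) * h' ^ (i + 1) = eco n α (i + 1) t * h' ^ (i + 1) := by
        intro i _
        rw [hgdef]; simp
      rw [Finset.sum_congr rfl e2]
      simp [hgdef]
    rw [e1, ← expand_poly n α p hp t h', eco_zero n α p hp t]
  have hposg : ∀ h' : ℝ, 0 < h' → h' ≤ b - t → 0 < ∑ k ∈ range (n + 1), g k * h' ^ k := by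
    intro h' h0 hle
    rw [hsum h']
    have := hsm (Set.mem_Icc.mpr ⟨hat, htb.le⟩)
      (Set.mem_Icc.mpr ⟨by linarith, by linarith⟩) (by linarith : t < t + h')
    linarith
  obtain ⟨h1, h1pos, h1le, hmain⟩ := keyC n g (b - t) (by linarith) (by simp [hgdef]) hposg
  refine ⟨h1, h1pos, ?_⟩
  intro h hh hhle
  have htdb : t + h ≤ b := by linarith [le_trans hhle h1le]
  have hsubIcc : Set.Icc t (t + h) ⊆ Set.Icc a b := Set.Icc_subset_Icc hat htdb
  set β : ℕ → ℝ := fun j => ∑ k ∈ range (n + 1), eco n α k t * h ^ k * bw n j k with hβdef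
  have hid : ∀ τ : ℝ, p (t + (t + h - t) * τ) = ∑ j ∈ range (n + 1), β j * Bb n j τ := by
    intro τ
    have harg : t + (t + h - t) * τ = t + h * τ := by ring
    rw [harg]
    calc p (t + h * τ) = ∑ k ∈ range (n + 1), eco n α k t * (h * τ) ^ k :=
          expand_poly n α p hp t (h * τ)
      _ = ∑ k ∈ range (n + 1), (eco n α k t * h ^ k) * τ ^ k := by
          apply Finset.sum_congr rfl
          intro k _
          rw [mul_pow]; ring
      _ = ∑ j ∈ range (n + 1), β j * Bb n j τ :=
          (bernstein_rep n (fun k => eco n α k t * h ^ k) τ).symm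
  have hS1 : ∀ j, β j - p t = ∑ k ∈ range (n + 1), g k * h ^ k * bw n j k := by
    intro j
    simp only [hβdef]
    rw [Finset.sum_range_succ' (fun k => eco n α k t * h ^ k * bw n j k) n,
        Finset.sum_range_succ' (fun k => g k * h ^ k * bw n j k) n]
    have e2 : ∀ i ∈ range n, g (i + 1) * h ^ (i + 1) * bw n j (i + 1)
        = eco n α (i + 1) t * h ^ (i + 1) * bw n j (i + 1) := by
      intro i _
      rw [hgdef]; simp
    rw [Finset.sum_congr rfl e2]
    simp [hgdef, bw_zero, eco_zero n α p hp t]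
  have hS2 : ∀ j, p (t + h) - β j = ∑ k ∈ range (n + 1), g k * h ^ k * (1 - bw n j k) := by
    intro j
    have h3 : ∑ k ∈ range (n + 1), g k * h ^ k * (1 - bw n j k)
        = (∑ k ∈ range (n + 1), g k * h ^ k) - ∑ k ∈ range (n + 1), g k * h ^ k * bw n j k := by
      rw [← Finset.sum_sub_distrib]
      apply Finset.sum_congr rfl
      intro k _; ring
    rw [h3, hsum h, ← hS1 j]
    ring
  have hb0 : β 0 = p t := by
    have h0 : ∑ k ∈ range (n + 1), g k * h ^ k * bw n 0 k = 0 := by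
      apply Finset.sum_eq_zero
      intro k _
      rcases Nat.eq_zero_or_pos k with hk | hk
      · subst hk; simp [hgdef]
      · rw [bw_eq_zero n hk]; ring
    have := hS1 0
    rw [h0] at this
    linarith
  have hbn : β n = p (t + h) := by
    have h0 : ∑ k ∈ range (n + 1), g k * h ^ k * (1 - bw n n k) = 0 := by
      apply Finset.sum_eq_zero
      intro k hk
      rw [Finset.mem_range] at hk
      rw [bw_self (by omega : k ≤ n)]
      ring
    have := hS2 n
    rw [h0] at this
    linarith
  have hlow : ∀ j ∈ range (n + 1), p t ≤ β j := by
    intro j hj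
    rw [Finset.mem_range] at hj
    have := (hmain h hh hhle j (by omega)).1
    have h2 := hS1 j
    linarith
  have hhigh : ∀ j ∈ range (n + 1), β j ≤ p (t + h) := by
    intro j hj
    rw [Finset.mem_range] at hj
    have := (hmain h hh hhle j (by omega)).2
    have h2 := hS2 j
    linarith
  refine ⟨β, ?_, ?_, ?_⟩
  · intro τ _
    have := hid τ
    simpa [Bb] using this
  · rw [inf'_eq_of_mem 0 (Finset.mem_range.mpr (Nat.succ_pos n)) hb0 hlow]
    exact isLeast_image_of_monotone hsm.monotoneOn hsubIcc (by linarith)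
  · rw [sup'_eq_of_mem n (Finset.mem_range.mpr (Nat.lt_succ_self n)) hbn hhigh]
    exact isGreatest_image_of_monotone hsm.monotoneOn hsubIcc (by linarith)

lemma left_piece (n : ℕ) (a b : ℝ) (p : ℝ → ℝ) (α : ℕ → ℝ)
    (hp : ∀ t : ℝ, p t = ∑ k ∈ range (n + 1), α k * t ^ k)
    (hsm : StrictMonoOn p (Set.Icc a b)) (t : ℝ) (hat : a < t) (htb : t ≤ b) :
    ∃ h1 : ℝ, 0 < h1 ∧ ∀ h : ℝ, 0 < h → h ≤ h1 → PieceGood n p (t - h) t := by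
  classical
  set g : ℕ → ℝ := fun k => if k = 0 then 0 else (-1) ^ (k + 1) * eco n α k t with hgdef
  have hterm : ∀ (i : ℕ) (h' : ℝ), g (i + 1) * h' ^ (i + 1)
      = -(eco n α (i + 1) t * (-h') ^ (i + 1)) := by
    intro i h'
    have h1 : (-h') ^ (i + 1) = (-1) ^ (i + 1) * h' ^ (i + 1) := by rw [neg_pow]
    simp only [hgdef, if_neg (Nat.succ_ne_zero i)]
    rw [h1, pow_succ]
    ring
  have hsum : ∀ h' : ℝ, ∑ k ∈ range (n + 1), g k * h' ^ k = p t - p (t - h') := by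
    intro h'
    have e1 : ∑ k ∈ range (n + 1), g k * h' ^ k
        = eco n α 0 t - ∑ k ∈ range (n + 1), eco n α k t * (-h') ^ k := by
      rw [Finset.sum_range_succ' (fun k => g k * h' ^ k) n,
          Finset.sum_range_succ' (fun k => eco n α k t * (-h') ^ k) n]
      have e2 : ∀ i ∈ range n, g (i + 1) * h' ^ (i + 1)
          = -(eco n α (i + 1) t * (-h') ^ (i + 1)) := fun i _ => hterm i h'
      rw [Finset.sum_congr rfl e2, Finset.sum_neg_distrib]
      simp [hgdef]
    have e3 : t + (-h') = t - h' := by ring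
    rw [e1, ← expand_poly n α p hp t (-h'), eco_zero n α p hp t, e3]
  have hposg : ∀ h' : ℝ, 0 < h' → h' ≤ t - a → 0 < ∑ k ∈ range (n + 1), g k * h' ^ k := by
    intro h' h0 hle
    rw [hsum h']
    have := hsm (Set.mem_Icc.mpr ⟨by linarith, by linarith⟩)
      (Set.mem_Icc.mpr ⟨hat.le, htb⟩) (by linarith : t - h' < t)
    linarith
  obtain ⟨h1, h1pos, h1le, hmain⟩ := keyC n g (t - a) (by linarith) (by simp [hgdef]) hposg
  refine ⟨h1, h1pos, ?_⟩
  intro h hh hhle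
  have hta : a ≤ t - h := by linarith [le_trans hhle h1le]
  have hsubIcc : Set.Icc (t - h) t ⊆ Set.Icc a b := Set.Icc_subset_Icc hta htb
  set β : ℕ → ℝ := fun j => ∑ k ∈ range (n + 1), eco n α k t * (-h) ^ k * bw n (n - j) k with hβdef
  have hid : ∀ τ : ℝ, p (t - h + (t - (t - h)) * τ) = ∑ j ∈ range (n + 1), β j * Bb n j τ := by
    intro τ
    have harg : t - h + (t - (t - h)) * τ = t + (-h) * (1 - τ) := by ring
    rw [harg]
    calc p (t + (-h) * (1 - τ)) = ∑ k ∈ range (n + 1), eco n α k t * ((-h) * (1 - τ)) ^ k :=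
          expand_poly n α p hp t ((-h) * (1 - τ))
      _ = ∑ k ∈ range (n + 1), (eco n α k t * (-h) ^ k) * (1 - τ) ^ k := by
          apply Finset.sum_congr rfl
          intro k _
          rw [mul_pow]; ring
      _ = ∑ j ∈ range (n + 1), β j * Bb n j τ :=
          (bernstein_rep_reflect n (fun k => eco n α k t * (-h) ^ k) τ).symm
  have hS1 : ∀ j, p t - β j = ∑ k ∈ range (n + 1), g k * h ^ k * bw n (n - j) k := by
    intro j
    simp only [hβdef]
    rw [Finset.sum_range_succ' (fun k => eco n α k t * (-h) ^ k * bw n (n - j) k) n,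
        Finset.sum_range_succ' (fun k => g k * h ^ k * bw n (n - j) k) n]
    have e2 : ∀ i ∈ range n, g (i + 1) * h ^ (i + 1) * bw n (n - j) (i + 1)
        = -(eco n α (i + 1) t * (-h) ^ (i + 1) * bw n (n - j) (i + 1)) := by
      intro i _
      rw [hterm i h]; ring
    rw [Finset.sum_congr rfl e2, Finset.sum_neg_distrib]
    simp [hgdef, bw_zero, eco_zero n α p hp t]
  have hS2 : ∀ j, β j - p (t - h) = ∑ k ∈ range (n + 1), g k * h ^ k * (1 - bw n (n - j) k) := by
    intro j
    have h3 : ∑ k ∈ range (n + 1), g k * h ^ k * (1 - bw n (n - j) k)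
        = (∑ k ∈ range (n + 1), g k * h ^ k)
          - ∑ k ∈ range (n + 1), g k * h ^ k * bw n (n - j) k := by
      rw [← Finset.sum_sub_distrib]
      apply Finset.sum_congr rfl
      intro k _; ring
    rw [h3, hsum h, ← hS1 j]
    ring
  have hb0 : β 0 = p (t - h) := by
    have h0 : ∑ k ∈ range (n + 1), g k * h ^ k * (1 - bw n (n - 0) k) = 0 := by
      apply Finset.sum_eq_zero
      intro k hk
      rw [Finset.mem_range] at hk
      rw [Nat.sub_zero, bw_self (by omega : k ≤ n)]
      ring
    have := hS2 0
    rw [h0] at this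
    linarith
  have hbn : β n = p t := by
    have h0 : ∑ k ∈ range (n + 1), g k * h ^ k * bw n (n - n) k = 0 := by
      apply Finset.sum_eq_zero
      intro k _
      rcases Nat.eq_zero_or_pos k with hk | hk
      · subst hk; simp [hgdef]
      · rw [Nat.sub_self, bw_eq_zero n hk]; ring
    have := hS1 n
    rw [h0] at this
    linarith
  have hlow : ∀ j ∈ range (n + 1), p (t - h) ≤ β j := by
    intro j hj
    have := (hmain h hh hhle (n - j) (by omega)).2
    have h2 := hS2 j
    linarith
  have hhigh : ∀ j ∈ range (n + 1), β j ≤ p t := by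
    intro j hj
    have := (hmain h hh hhle (n - j) (by omega)).1
    have h2 := hS1 j
    linarith
  refine ⟨β, ?_, ?_, ?_⟩
  · intro τ _
    have := hid τ
    simpa [Bb] using this
  · rw [inf'_eq_of_mem 0 (Finset.mem_range.mpr (Nat.succ_pos n)) hb0 hlow]
    exact isLeast_image_of_monotone hsm.monotoneOn hsubIcc (by linarith)
  · rw [sup'_eq_of_mem n (Finset.mem_range.mpr (Nat.lt_succ_self n)) hbn hhigh]
    exact isGreatest_image_of_monotone hsm.monotoneOn hsubIcc (by linarith)

lemma partition_single {G : ℝ → ℝ → Prop} {a y : ℝ} (hay : a < y) (hG : G a y) :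
    ∃ m : ℕ, 0 < m ∧ ∃ s : ℕ → ℝ, s 0 = a ∧ s m = y ∧ (∀ i < m, s i < s (i + 1)) ∧
      ∀ i < m, G (s i) (s (i + 1)) := by
  refine ⟨1, one_pos, fun i => if i = 0 then a else y, by simp, by simp, ?_, ?_⟩
  · intro i hi
    interval_cases i
    simpa using hay
  · intro i hi
    interval_cases i
    simpa using hG

lemma partition_append {G : ℝ → ℝ → Prop} {a x y : ℝ}
    (hpart : ∃ m : ℕ, 0 < m ∧ ∃ s : ℕ → ℝ, s 0 = a ∧ s m = x ∧ (∀ i < m, s i < s (i + 1)) ∧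
      ∀ i < m, G (s i) (s (i + 1)))
    (hxy : x < y) (hG : G x y) :
    ∃ m : ℕ, 0 < m ∧ ∃ s : ℕ → ℝ, s 0 = a ∧ s m = y ∧ (∀ i < m, s i < s (i + 1)) ∧
      ∀ i < m, G (s i) (s (i + 1)) := by
  obtain ⟨m, hm, s, hs0, hsm, hmono, hG'⟩ := hpart
  refine ⟨m + 1, by omega, fun i => if i ≤ m then s i else y, by simp [hs0], by simp, ?_, ?_⟩
  · intro i hi
    rcases lt_or_ge i m with h | h
    · simp only [if_pos (by omega : i ≤ m), if_pos (by omega : i + 1 ≤ m)]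
      exact hmono i h
    · have : i = m := by omega
      subst this
      simp only [if_pos le_rfl, if_neg (by omega : ¬ i + 1 ≤ i)]
      rw [hsm]; exact hxy
  · intro i hi
    rcases lt_or_ge i m with h | h
    · simp only [if_pos (by omega : i ≤ m), if_pos (by omega : i + 1 ≤ m)]
      exact hG' i h
    · have : i = m := by omega
      subst this
      simp only [if_pos le_rfl, if_neg (by omega : ¬ i + 1 ≤ i)]
      rw [hsm]; exact hG

lemma cousin_partition (a b : ℝ) (hab : a < b) (G : ℝ → ℝ → Prop) (δ : ℝ → ℝ)
    (hδ : ∀ t ∈ Set.Icc a b, 0 < δ t)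
    (HG : ∀ t ∈ Set.Icc a b, ∀ c d : ℝ, a ≤ c → d ≤ b → c < d → d - c ≤ δ t →
      (c = t ∨ d = t) → G c d) :
    ∃ m : ℕ, 0 < m ∧ ∃ s : ℕ → ℝ, s 0 = a ∧ s m = b ∧ (∀ i < m, s i < s (i + 1)) ∧
      ∀ i < m, G (s i) (s (i + 1)) := by
  set P : ℝ → Prop := fun x => ∃ m : ℕ, 0 < m ∧ ∃ s : ℕ → ℝ, s 0 = a ∧ s m = x ∧
      (∀ i < m, s i < s (i + 1)) ∧ ∀ i < m, G (s i) (s (i + 1)) with hPdef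
  set S : Set ℝ := {x | x ∈ Set.Icc a b ∧ (x = a ∨ P x)} with hSdef
  have haS : a ∈ S := ⟨⟨le_rfl, hab.le⟩, Or.inl rfl⟩
  have hSne : S.Nonempty := ⟨a, haS⟩
  have hbdd : BddAbove S := ⟨b, fun x hx => hx.1.2⟩
  set u := sSup S with hudef
  have hau : a ≤ u := le_csSup hbdd haS
  have hub : u ≤ b := csSup_le hSne fun x hx => hx.1.2
  have huI : u ∈ Set.Icc a b := ⟨hau, hub⟩
  have hδu : 0 < δ u := hδ u huI
  obtain ⟨x, hxS, hxgt⟩ : ∃ x ∈ S, u - δ u < x :=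
    exists_lt_of_lt_csSup hSne (by linarith)
  have hxu : x ≤ u := le_csSup hbdd hxS
  have step1 : u = a ∨ P u := by
    rcases eq_or_lt_of_le hxu with heq | hlt
    · rw [← heq]; exact hxS.2
    · have hGxu : G x u := HG u huI x u hxS.1.1 hub hlt (by linarith) (Or.inr rfl)
      rcases hxS.2 with hxa | hPx
      · subst hxa
        exact Or.inr (partition_single hlt hGxu)
      · exact Or.inr (partition_append hPx hlt hGxu)
  have huv : u ≤ min b (u + δ u) := le_min hub (by linarith)
  have hvS : min b (u + δ u) ∈ S := by
    refine ⟨⟨le_trans hau huv, min_le_left _ _⟩, ?_⟩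
    rcases eq_or_lt_of_le huv with heq | hlt
    · rw [← heq]; exact step1
    · have hGuv : G u (min b (u + δ u)) :=
        HG u huI u (min b (u + δ u)) hau (min_le_left _ _) hlt
          (by have := min_le_right b (u + δ u); linarith) (Or.inl rfl)
      rcases step1 with hua | hPu
      · rw [hua] at hlt hGuv ⊢
        exact Or.inr (partition_single hlt hGuv)
      · exact Or.inr (partition_append hPu hlt hGuv)
  have hvu : min b (u + δ u) ≤ u := le_csSup hbdd hvS
  have hbu : b ≤ u := by
    by_contra hc
    push_neg at hc
    have : u < min b (u + δ u) := lt_min hc (by linarith)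
    linarith
  have hube : u = b := le_antisymm hub hbu
  have hveq : min b (u + δ u) = b := by
    rw [hube]
    have h0 : 0 < δ b := hube ▸ hδu
    exact min_eq_left (by linarith)
  rw [hveq] at hvS
  rcases hvS.2 with hba | hPb
  · exact absurd hba.symm hab.ne
  · exact hPb

lemma const_prop (n : ℕ) (α : ℕ → ℝ) (p : ℝ → ℝ)
    (hp : ∀ t : ℝ, p t = ∑ k ∈ range (n + 1), α k * t ^ k) (x y v : ℝ) (hxy : x < y)
    (hc : ∀ z ∈ Set.Icc x y, p z = v) : ∀ z : ℝ, p z = v := by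
  set P : Polynomial ℝ :=
    (∑ k ∈ range (n + 1), Polynomial.C (α k) * Polynomial.X ^ k) - Polynomial.C v with hPdef
  have hev : ∀ z : ℝ, P.eval z = p z - v := by
    intro z
    rw [hPdef, hp z]
    simp [Polynomial.eval_finset_sum]
  have hP0 : P = 0 := by
    apply Polynomial.eq_zero_of_infinite_isRoot
    have hsub : Set.Icc x y ⊆ {z : ℝ | P.IsRoot z} := by
      intro z hz
      simp only [Set.mem_setOf_eq, Polynomial.IsRoot]
      rw [hev z, hc z hz, sub_self]
    exact (Set.Icc_infinite hxy).mono hsub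
  intro z
  have h1 := hev z
  rw [hP0] at h1
  simp at h1
  linarith

lemma core_strictMono (n : ℕ) (a b : ℝ) (hab : a < b) (p : ℝ → ℝ) (α : ℕ → ℝ)
    (hp : ∀ t : ℝ, p t = ∑ k ∈ range (n + 1), α k * t ^ k)
    (hsm : StrictMonoOn p (Set.Icc a b)) :
    ∃ m : ℕ, 0 < m ∧ ∃ s : ℕ → ℝ, s 0 = a ∧ s m = b ∧ (∀ i < m, s i < s (i + 1)) ∧
      ∀ i < m, PieceGood n p (s i) (s (i + 1)) := by
  classical
  have hR : ∀ t : ℝ, a ≤ t ∧ t < b →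
      ∃ h1 : ℝ, 0 < h1 ∧ ∀ h : ℝ, 0 < h → h ≤ h1 → PieceGood n p t (t + h) :=
    fun t ht => right_piece n a b p α hp hsm t ht.1 ht.2
  have hL : ∀ t : ℝ, a < t ∧ t ≤ b →
      ∃ h1 : ℝ, 0 < h1 ∧ ∀ h : ℝ, 0 < h → h ≤ h1 → PieceGood n p (t - h) t :=
    fun t ht => left_piece n a b p α hp hsm t ht.1 ht.2
  set δR : ℝ → ℝ := fun t => if h : a ≤ t ∧ t < b then (hR t h).choose else 1 with hδRdef
  set δL : ℝ → ℝ := fun t => if h : a < t ∧ t ≤ b then (hL t h).choose else 1 with hδLdef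
  have hδRpos : ∀ t, 0 < δR t := by
    intro t
    simp only [hδRdef]
    split_ifs with h
    · exact (hR t h).choose_spec.1
    · exact one_pos
  have hδLpos : ∀ t, 0 < δL t := by
    intro t
    simp only [hδLdef]
    split_ifs with h
    · exact (hL t h).choose_spec.1
    · exact one_pos
  apply cousin_partition a b hab _ (fun t => min (δR t) (δL t))
    (fun t _ => lt_min (hδRpos t) (hδLpos t))
  intro t ht c d hac hdb hcd hlen htag
  rcases htag with rfl | rfl
  · -- c = t : right piece
    have hcond : a ≤ c ∧ c < b := ⟨hac, lt_of_lt_of_le hcd hdb⟩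
    have hspec := (hR c hcond).choose_spec
    have hδeq : δR c = (hR c hcond).choose := by
      simp only [hδRdef]
      rw [dif_pos hcond]
    have hlen' : d - c ≤ (hR c hcond).choose := by
      rw [← hδeq]
      exact le_trans hlen (min_le_left _ _)
    have hres := hspec.2 (d - c) (by linarith) hlen'
    have harg : c + (d - c) = d := by ring
    rwa [harg] at hres
  · -- d = t : left piece
    have hcond : a < d ∧ d ≤ b := ⟨lt_of_le_of_lt hac hcd, hdb⟩
    have hspec := (hL d hcond).choose_spec
    have hδeq : δL d = (hL d hcond).choose := by
      simp only [hδLdef]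
      rw [dif_pos hcond]
    have hlen' : d - c ≤ (hL d hcond).choose := by
      rw [← hδeq]
      exact le_trans hlen (min_le_right _ _)
    have hres := hspec.2 (d - c) (by linarith) hlen'
    have harg : d - (d - c) = c := by ring
    rwa [harg] at hres

theorem exists_finite_partition_tight_bounds (n : ℕ) (a b : ℝ) (hab : a < b)
    (p : ℝ → ℝ) (α : ℕ → ℝ)
    (hp : ∀ t : ℝ, p t = ∑ k ∈ Finset.range (n + 1), α k * t ^ k)
    (hmono : MonotoneOn p (Set.Icc a b) ∨ AntitoneOn p (Set.Icc a b)) :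
    ∃ m : ℕ, 0 < m ∧ ∃ s : ℕ → ℝ,
      s 0 = a ∧ s m = b ∧ (∀ i < m, s i < s (i + 1)) ∧
      ∀ i < m, ∃ β : ℕ → ℝ,
        (∀ t ∈ Set.Icc (0 : ℝ) 1,
          p (s i + (s (i + 1) - s i) * t) =
            ∑ j ∈ Finset.range (n + 1),
              β j * ((n.choose j : ℝ) * t ^ j * (1 - t) ^ (n - j))) ∧
        IsLeast (p '' Set.Icc (s i) (s (i + 1)))
          ((Finset.range (n + 1)).inf' ⟨0, Finset.mem_range.mpr (Nat.succ_pos n)⟩ β) ∧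
        IsGreatest (p '' Set.Icc (s i) (s (i + 1)))
          ((Finset.range (n + 1)).sup' ⟨0, Finset.mem_range.mpr (Nat.succ_pos n)⟩ β) := by
  classical
  by_cases hconst : ∀ z : ℝ, p z = p a
  · -- constant polynomial
    refine ⟨1, one_pos, fun i => if i = 0 then a else b, by simp, by simp, ?_, ?_⟩
    · intro i hi
      interval_cases i
      simpa using hab
    · intro i hi
      interval_cases i
      simp only [reduceIte, Nat.add_eq, Nat.succ_ne_zero]
      refine ⟨fun _ => p a, ?_, ?_, ?_⟩
      · intro τ _
        have h1 := bernstein_basis_eq n 0 (Nat.zero_le n) τ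
        simp only [bw_zero, one_mul, pow_zero] at h1
        rw [hconst (a + (b - a) * τ), ← Finset.mul_sum]
        simp only [Bb] at h1
        rw [h1, mul_one]
      · erw [Finset.inf'_const]
        constructor
        · exact ⟨a, ⟨le_rfl, hab.le⟩, rfl⟩
        · rintro y ⟨x, _, rfl⟩
          rw [hconst x]
      · erw [Finset.sup'_const]
        constructor
        · exact ⟨a, ⟨le_rfl, hab.le⟩, rfl⟩
        · rintro y ⟨x, _, rfl⟩
          rw [hconst x]
  · -- nonconstant
    have hcp : ∀ x y : ℝ, x < y → (∀ z ∈ Set.Icc x y, p z = p x) → False := by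
      intro x y hxy hcz
      have hglob := const_prop n α p hp x y (p x) hxy hcz
      exact hconst fun z => by rw [hglob z, ← hglob a]
    rcases hmono with hm | hm
    · -- monotone case
      have hsm : StrictMonoOn p (Set.Icc a b) := by
        intro x hx y hy hxy
        rcases lt_or_eq_of_le (hm hx hy hxy.le) with h | h
        · exact h
        · exfalso
          apply hcp x y hxy
          intro z hz
          have hzI : z ∈ Set.Icc a b := ⟨le_trans hx.1 hz.1, le_trans hz.2 hy.2⟩
          have h1 := hm hx hzI hz.1
          have h2 := hm hzI hy hz.2
          exact le_antisymm (by linarith) h1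
      obtain ⟨m, hm0, s, hs0, hsmb, hinc, hGi⟩ := core_strictMono n a b hab p α hp hsm
      exact ⟨m, hm0, s, hs0, hsmb, hinc, hGi⟩
    · -- antitone case
      have hsm : StrictMonoOn (fun z => -p z) (Set.Icc a b) := by
        intro x hx y hy hxy
        rcases lt_or_eq_of_le (hm hx hy hxy.le) with h | h
        · simpa using h
        · exfalso
          apply hcp x y hxy
          intro z hz
          have hzI : z ∈ Set.Icc a b := ⟨le_trans hx.1 hz.1, le_trans hz.2 hy.2⟩
          have h1 := hm hx hzI hz.1
          have h2 := hm hzI hy hz.2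
          exact le_antisymm h1 (by linarith)
      have hq : ∀ t : ℝ, (fun z => -p z) t = ∑ k ∈ range (n + 1), (-α k) * t ^ k := by
        intro t
        simp only
        rw [hp t, ← Finset.sum_neg_distrib]
        apply Finset.sum_congr rfl
        intro k _; ring
      obtain ⟨m, hm0, s, hs0, hsmb, hinc, hGi⟩ :=
        core_strictMono n a b hab (fun z => -p z) (fun k => -α k) hq hsm
      refine ⟨m, hm0, s, hs0, hsmb, hinc, ?_⟩
      intro i hi
      obtain ⟨β', hid, hleast, hgreat⟩ := hGi i hi
      refine ⟨fun j => -β' j, ?_, ?_, ?_⟩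
      · intro τ hτ
        have h1 := hid τ hτ
        simp only at h1
        have h2 : p (s i + (s (i + 1) - s i) * τ)
            = -(-(p (s i + (s (i + 1) - s i) * τ))) := by ring
        rw [h2, h1, ← Finset.sum_neg_distrib]
        apply Finset.sum_congr rfl
        intro j _; ring
      · have hinf : (range (n + 1)).inf' ⟨0, Finset.mem_range.mpr (Nat.succ_pos n)⟩
            (fun j => -β' j)
            = -((range (n + 1)).sup' ⟨0, Finset.mem_range.mpr (Nat.succ_pos n)⟩ β') := by
          apply le_antisymm
          · obtain ⟨j0, hj0, hj0e⟩ := Finset.exists_mem_eq_sup'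
              (⟨0, Finset.mem_range.mpr (Nat.succ_pos n)⟩ :
                (range (n + 1)).Nonempty) β'
            calc (range (n + 1)).inf' _ (fun j => -β' j) ≤ -β' j0 :=
                  Finset.inf'_le _ hj0
              _ = _ := by rw [hj0e]
          · apply Finset.le_inf'
            intro j hj
            exact neg_le_neg (Finset.le_sup' β' hj)
        rw [hinf]
        obtain ⟨⟨x0, hx0, hx0e⟩, hub⟩ := hgreat
        constructor
        · refine ⟨x0, hx0, ?_⟩
          simp only at hx0e
          rw [← hx0e]; ring
        · rintro y ⟨x, hx, rfl⟩
          have h3 := hub ⟨x, hx, rfl⟩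
          simp only at h3
          linarith
      · have hsup : (range (n + 1)).sup' ⟨0, Finset.mem_range.mpr (Nat.succ_pos n)⟩
            (fun j => -β' j)
            = -((range (n + 1)).inf' ⟨0, Finset.mem_range.mpr (Nat.succ_pos n)⟩ β') := by
          apply le_antisymm
          · apply Finset.sup'_le
            intro j hj
            exact neg_le_neg (Finset.inf'_le β' hj)
          · obtain ⟨j0, hj0, hj0e⟩ := Finset.exists_mem_eq_inf'
              (⟨0, Finset.mem_range.mpr (Nat.succ_pos n)⟩ :
                (range (n + 1)).Nonempty) β'
            calc -((range (n + 1)).inf' _ β') = -β' j0 := by rw [hj0e]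
              _ ≤ _ := Finset.le_sup' (fun j => -β' j) hj0
        rw [hsup]
        obtain ⟨⟨x0, hx0, hx0e⟩, hlb⟩ := hleast
        constructor
        · refine ⟨x0, hx0, ?_⟩
          simp only at hx0e
          rw [← hx0e]; ring
        · rintro y ⟨x, hx, rfl⟩
          have h3 := hlb ⟨x, hx, rfl⟩
          simp only at h3
          linarith
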